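/- arXiv:1909.07715 — 2 statements merged into one kernel-verified Lean document; each statement's English description precedes it below -/
import Mathlib

section
/- Limit-free formula for the directed Ricci curvature: for distinct x, y ∈ V, κ(x,y) = inf{∇_{xy}ℒf : f ∈ Lip₁(V), ∇_{xy}f = 1}, where κ(x,y) := lim_{ε→0} κ_ε(x,y)/ε. -/
open Finset Filter Topology MeasureTheory
open scoped Classical

noncomputable section

variable {V : Type*}

/-- Vertex weight `μ(x) = Σ_y μ_{xy}`. -/
def vdeg [Fintype V] (μ : V → V → ℝ) (x : V) : ℝ := ∑ y, μ x y

/-- Transition probability kernel `P(x,y) = μ_{xy}/μ(x)`. -/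
def transP [Fintype V] (μ : V → V → ℝ) (x y : V) : ℝ := μ x y / vdeg μ x

/-- `m` is the Perron measure of `(V,μ)`. -/
def IsPerron [Fintype V] (μ : V → V → ℝ) (m : V → ℝ) : Prop :=
  (∀ x, 0 < m x) ∧ (∑ x, m x = 1) ∧ ∀ x, m x = ∑ y, m y * transP μ y x

/-- Mean transition probability kernel `𝒫 = (P + ←P)/2`. -/
def meanK [Fintype V] (μ : V → V → ℝ) (m : V → ℝ) (x y : V) : ℝ :=
  (transP μ x y + m y / m x * transP μ y x) / 2

/-- There is a directed path of length `n` from `x` to `y`. -/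
def HasPathLen (μ : V → V → ℝ) (x y : V) (n : ℕ) : Prop :=
  ∃ c : ℕ → V, c 0 = x ∧ c n = y ∧ ∀ i < n, 0 < μ (c i) (c (i + 1))

/-- The (non-symmetric) graph distance. -/
def gdist (μ : V → V → ℝ) (x y : V) : ℝ :=
  sInf {r : ℝ | ∃ n : ℕ, (r : ℝ) = (n : ℝ) ∧ HasPathLen μ x y n}

/-- The graph is simple: no loops. -/
def IsSimpleW (μ : V → V → ℝ) : Prop := ∀ x, μ x x = 0

/-- The edge weight is nonnegative. -/
def Nonneg (μ : V → V → ℝ) : Prop := ∀ x y, 0 ≤ μ x y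

/-- The graph is strongly connected. -/
def StronglyConnectedW (μ : V → V → ℝ) : Prop := ∀ x y, ∃ n, HasPathLen μ x y n

/-- `π` is a coupling of the probability measures `ν₀, ν₁`. -/
def IsCoupling [Fintype V] (π : V → V → ℝ) (ν₀ ν₁ : V → ℝ) : Prop :=
  (∀ x y, 0 ≤ π x y) ∧ (∀ x, ∑ y, π x y = ν₀ x) ∧ (∀ y, ∑ x, π x y = ν₁ y)

/-- The L¹-Wasserstein distance with cost `d`. -/
def Wass [Fintype V] (d : V → V → ℝ) (ν₀ ν₁ : V → ℝ) : ℝ :=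
  sInf {c : ℝ | ∃ π, IsCoupling π ν₀ ν₁ ∧ c = ∑ x, ∑ y, d x y * π x y}

/-- The probability measure `ν^ε_x`. -/
def nu [Fintype V] (P : V → V → ℝ) (ε : ℝ) (x z : V) : ℝ :=
  if z = x then 1 - ε else ε * P x z

/-- `κ_ε(x,y) = 1 − W(ν^ε_x, ν^ε_y)/d(x,y)`. -/
def kappaEps [Fintype V] (μ : V → V → ℝ) (m : V → ℝ) (ε : ℝ) (x y : V) : ℝ :=
  1 - Wass (gdist μ) (nu (meanK μ m) ε x) (nu (meanK μ m) ε y) / gdist μ x y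

/-- The (positive) Chung Laplacian associated with a kernel `P`. -/
def chungL [Fintype V] (P : V → V → ℝ) (f : V → ℝ) (x : V) : ℝ :=
  f x - ∑ y, P x y * f y

/-- The negative Laplacian `Δ = −ℒ`. -/
def negL [Fintype V] (P : V → V → ℝ) (f : V → ℝ) (x : V) : ℝ :=
  (∑ y, P x y * f y) - f x

/-- `f` is 1-Lipschitz with respect to the non-symmetric distance `d`. -/
def Lip1 (d : V → V → ℝ) (f : V → ℝ) : Prop := ∀ x y, f y - f x ≤ d x y

/-- The asymptotic mean curvature `ℋ_x = ℒρ_x(x)`. -/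
def Hout [Fintype V] (μ : V → V → ℝ) (m : V → ℝ) (x : V) : ℝ :=
  chungL (meanK μ m) (fun y => gdist μ x y) x

/-- The reverse asymptotic mean curvature `←ℋ_x = ℒ←ρ_x(x)`. -/
def Hin [Fintype V] (μ : V → V → ℝ) (m : V → ℝ) (x : V) : ℝ :=
  chungL (meanK μ m) (fun y => gdist μ y x) x

/-- The mixed asymptotic mean curvature `ℋ(x,y) = −(ℋ_x + ←ℋ_y)`. -/
def Hmix [Fintype V] (μ : V → V → ℝ) (m : V → ℝ) (x y : V) : ℝ :=
  -(Hout μ m x + Hin μ m y)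

/-- The neighborhood `𝒩_x = N_x ∪ ←N_x`. -/
def nbr [Fintype V] (μ : V → V → ℝ) (x : V) : Finset V :=
  Finset.univ.filter (fun y => 0 < μ x y ∨ 0 < μ y x)

/-! ### Auxiliary lemmas -/

set_option linter.unusedSectionVars false

section Aux

variable [Fintype V]

theorem RLF.hasPathLen_refl (μ : V → V → ℝ) (x : V) : HasPathLen μ x x 0 :=
  ⟨fun _ => x, rfl, rfl, fun i hi => absurd hi (Nat.not_lt_zero i)⟩

theorem RLF.gdist_eq_find (μ : V → V → ℝ) {x y : V} (h : ∃ n, HasPathLen μ x y n) :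
    gdist μ x y = (Nat.find h : ℝ) := by
  apply IsLeast.csInf_eq
  constructor
  · exact ⟨Nat.find h, rfl, Nat.find_spec h⟩
  · rintro r ⟨n, rfl, hn⟩
    exact_mod_cast Nat.find_min' h hn

theorem RLF.gdist_le_of_path {μ : V → V → ℝ} {x y : V} {n : ℕ} (h : HasPathLen μ x y n) :
    gdist μ x y ≤ (n : ℝ) := by
  rw [RLF.gdist_eq_find μ ⟨n, h⟩]
  exact_mod_cast Nat.find_min' _ h

theorem RLF.gdist_self (μ : V → V → ℝ) (x : V) : gdist μ x x = 0 := by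
  have h := RLF.gdist_le_of_path (RLF.hasPathLen_refl μ x)
  have h2 : (0:ℝ) ≤ gdist μ x x := by
    rw [RLF.gdist_eq_find μ ⟨0, RLF.hasPathLen_refl μ x⟩]
    positivity
  simpa using le_antisymm (by simpa using h) h2

theorem RLF.gdist_nonneg (μ : V → V → ℝ) (hconn : StronglyConnectedW μ) (x y : V) :
    0 ≤ gdist μ x y := by
  rw [RLF.gdist_eq_find μ (hconn x y)]; positivity

theorem RLF.path_trans {μ : V → V → ℝ} {x y z : V} {n m : ℕ}
    (h1 : HasPathLen μ x y n) (h2 : HasPathLen μ y z m) : HasPathLen μ x z (n + m) := by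
  obtain ⟨c1, hc10, hc1n, hc1⟩ := h1
  obtain ⟨c2, hc20, hc2m, hc2⟩ := h2
  refine ⟨fun i => if i < n then c1 i else c2 (i - n), ?_, ?_, ?_⟩
  · rcases Nat.eq_zero_or_pos n with hn | hn
    · subst hn; simpa [hc20, ← hc10] using hc1n.symm
    · simp [hn, hc10]
  · have : ¬ (n + m < n) := by omega
    simp [this, hc2m]
  · intro i hi
    rcases lt_or_ge i n with h | h
    · rcases Nat.lt_or_ge (i+1) n with h' | h'
      · simpa [h, h'] using hc1 i h
      · have hin : i + 1 = n := by omega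
        have : c2 (i + 1 - n) = c1 (i+1) := by
          rw [hin]; simp [hc20, ← hc1n]
        simp only [if_pos h, if_neg (by omega : ¬ i + 1 < n), this]
        exact hc1 i h
    · have h1' : ¬ i < n := by omega
      have h2' : ¬ i + 1 < n := by omega
      have : i + 1 - n = (i - n) + 1 := by omega
      simp only [if_neg h1', if_neg h2', this]
      exact hc2 _ (by omega)

theorem RLF.gdist_triangle (μ : V → V → ℝ) (hconn : StronglyConnectedW μ) (x y z : V) :
    gdist μ x z ≤ gdist μ x y + gdist μ y z := by
  rw [RLF.gdist_eq_find μ (hconn x y), RLF.gdist_eq_find μ (hconn y z)]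
  have := RLF.gdist_le_of_path (RLF.path_trans (Nat.find_spec (hconn x y)) (Nat.find_spec (hconn y z)))
  push_cast at this ⊢
  linarith

theorem RLF.one_le_gdist (μ : V → V → ℝ) (hconn : StronglyConnectedW μ) {x y : V}
    (hxy : x ≠ y) : 1 ≤ gdist μ x y := by
  rw [RLF.gdist_eq_find μ (hconn x y)]
  have : Nat.find (hconn x y) ≠ 0 := by
    intro h0
    have := Nat.find_spec (hconn x y)
    rw [h0] at this
    obtain ⟨c, hc0, hcn, _⟩ := this
    exact hxy (hc0 ▸ hcn ▸ rfl)
  exact_mod_cast Nat.one_le_iff_ne_zero.mpr this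

theorem RLF.exists_out {μ : V → V → ℝ} (hconn : StronglyConnectedW μ)
    {x y : V} (hxy : x ≠ y) (w : V) : ∃ z, 0 < μ w z := by
  have hne : ∃ y', y' ≠ w := by
    by_cases h : x = w
    · exact ⟨y, fun hy => hxy (h.trans hy.symm ▸ rfl)⟩
    · exact ⟨x, h⟩
  obtain ⟨y', hy'⟩ := hne
  obtain ⟨n, c, hc0, hcn, hc⟩ := hconn w y'
  rcases Nat.eq_zero_or_pos n with hn | hn
  · subst hn; exact absurd (hc0 ▸ hcn).symm hy'
  · exact ⟨c 1, hc0 ▸ hc 0 hn⟩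

variable {μ : V → V → ℝ} {m : V → ℝ}

theorem RLF.vdeg_pos (hnn : Nonneg μ) {w : V} (hz : ∃ z, 0 < μ w z) : 0 < vdeg μ w := by
  obtain ⟨z, hz⟩ := hz
  exact lt_of_lt_of_le hz (Finset.single_le_sum (fun i _ => hnn w i) (Finset.mem_univ z))

theorem RLF.transP_nonneg (hnn : Nonneg μ) (hw : 0 < vdeg μ w) (z : V) : 0 ≤ transP μ w z :=
  div_nonneg (hnn w z) hw.le

theorem RLF.sum_transP (hw : 0 < vdeg μ w) : ∑ z, transP μ w z = 1 := by
  unfold transP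
  rw [← Finset.sum_div]
  exact div_self hw.ne'

theorem RLF.meanK_nonneg (hnn : Nonneg μ) (hm : IsPerron μ m)
    (hv : ∀ w, 0 < vdeg μ w) (w z : V) : 0 ≤ meanK μ m w z := by
  unfold meanK
  have h1 := RLF.transP_nonneg hnn (hv w) z
  have h2 := RLF.transP_nonneg hnn (hv z) w
  have h3 : 0 ≤ m z / m w := div_nonneg (hm.1 z).le (hm.1 w).le
  positivity

theorem RLF.sum_meanK (hm : IsPerron μ m) (hv : ∀ w, 0 < vdeg μ w) (w : V) :
    ∑ z, meanK μ m w z = 1 := by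
  unfold meanK
  rw [← Finset.sum_div, Finset.sum_add_distrib, RLF.sum_transP (hv w)]
  have : ∑ z, m z / m w * transP μ z w = (∑ z, m z * transP μ z w) / m w := by
    rw [Finset.sum_div]; congr 1; ext z; ring
  rw [this, ← hm.2.2 w, div_self (hm.1 w).ne']
  norm_num

theorem RLF.meanK_self (hsimple : IsSimpleW μ) (w : V) : meanK μ m w w = 0 := by
  unfold meanK transP
  rw [hsimple w]
  simp

theorem RLF.nu_nonneg {P : V → V → ℝ} (hP : ∀ z, 0 ≤ P w z) {ε : ℝ} (hε0 : 0 ≤ ε)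
    (hε1 : ε ≤ 1) (z : V) : 0 ≤ nu P ε w z := by
  unfold nu
  split
  · linarith
  · exact mul_nonneg hε0 (hP z)

theorem RLF.sum_nu_mul {P : V → V → ℝ} {w : V} (hPw : P w w = 0) (ε : ℝ) (f : V → ℝ) :
    ∑ z, nu P ε w z * f z = f w - ε * chungL P f w := by
  unfold nu chungL
  have : ∀ z, (if z = w then 1 - ε else ε * P w z) * f z
      = ε * (P w z * f z) + (if z = w then (1 - ε) * f z - ε * (P w z * f z) else 0) := by
    intro z
    split <;> rename_i h
    · ring
    · ring
  rw [Finset.sum_congr rfl (fun z _ => this z)]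
  rw [Finset.sum_add_distrib, Finset.sum_ite_eq' Finset.univ w, ← Finset.mul_sum]
  simp [hPw]
  ring

theorem RLF.sum_nu {P : V → V → ℝ} {w : V} (hPw : P w w = 0) (hrow : ∑ z, P w z = 1)
    (ε : ℝ) : ∑ z, nu P ε w z = 1 := by
  have := RLF.sum_nu_mul (f := fun _ => 1) hPw ε
  simpa [chungL, hrow] using this

theorem RLF.chungL_sub_const {P : V → V → ℝ} (hrow : ∑ z, P w z = 1) (f : V → ℝ) (c : ℝ) :
    chungL P (fun z => f z - c) w = chungL P f w := by
  unfold chungL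
  simp only [mul_sub, Finset.sum_sub_distrib, ← Finset.sum_mul, hrow]
  ring

theorem RLF.prod_coupling {ν₀ ν₁ : V → ℝ} (h0 : ∀ a, 0 ≤ ν₀ a) (h1 : ∀ a, 0 ≤ ν₁ a)
    (hs0 : ∑ a, ν₀ a = 1) (hs1 : ∑ a, ν₁ a = 1) :
    IsCoupling (fun a b => ν₀ a * ν₁ b) ν₀ ν₁ := by
  refine ⟨fun a b => mul_nonneg (h0 a) (h1 b), fun a => ?_, fun b => ?_⟩
  · rw [← Finset.mul_sum, hs1, mul_one]
  · rw [← Finset.sum_mul, hs0, one_mul]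

theorem RLF.cost_nonneg {d : V → V → ℝ} (hd : ∀ a b, 0 ≤ d a b) {π : V → V → ℝ}
    (hπ : ∀ a b, 0 ≤ π a b) : 0 ≤ ∑ a, ∑ b, d a b * π a b :=
  Finset.sum_nonneg fun a _ => Finset.sum_nonneg fun b _ => mul_nonneg (hd a b) (hπ a b)

theorem RLF.wass_le {d : V → V → ℝ} (hd : ∀ a b, 0 ≤ d a b) {ν₀ ν₁ : V → ℝ}
    {π : V → V → ℝ} (hπ : IsCoupling π ν₀ ν₁) :
    Wass d ν₀ ν₁ ≤ ∑ a, ∑ b, d a b * π a b := by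
  apply csInf_le
  · refine ⟨0, fun c hc => ?_⟩
    obtain ⟨π', hπ', rfl⟩ := hc
    exact RLF.cost_nonneg hd hπ'.1
  · exact ⟨π, hπ, rfl⟩

theorem RLF.le_wass {d : V → V → ℝ} {ν₀ ν₁ : V → ℝ} {f : V → ℝ} (hf : Lip1 d f)
    (hne : ∃ π, IsCoupling π ν₀ ν₁) :
    (∑ b, f b * ν₁ b) - ∑ a, f a * ν₀ a ≤ Wass d ν₀ ν₁ := by
  apply le_csInf
  · obtain ⟨π, hπ⟩ := hne
    exact ⟨_, π, hπ, rfl⟩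
  · rintro c ⟨π, hπ, rfl⟩
    have key : ∀ a b, (f b - f a) * π a b ≤ d a b * π a b := fun a b =>
      mul_le_mul_of_nonneg_right (hf a b) (hπ.1 a b)
    have h1 : ∑ a, ∑ b, (f b - f a) * π a b ≤ ∑ a, ∑ b, d a b * π a b :=
      Finset.sum_le_sum fun a _ => Finset.sum_le_sum fun b _ => key a b
    have h2 : ∑ a, ∑ b, (f b - f a) * π a b
        = (∑ b, f b * ν₁ b) - ∑ a, f a * ν₀ a := by
      have : ∀ a, ∑ b, (f b - f a) * π a b = (∑ b, f b * π a b) - f a * ν₀ a := by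
        intro a
        rw [← hπ.2.1 a, Finset.mul_sum, ← Finset.sum_sub_distrib]
        exact Finset.sum_congr rfl fun b _ => by ring
      rw [Finset.sum_congr rfl fun a _ => this a, Finset.sum_sub_distrib,
        Finset.sum_comm]
      congr 1
      exact Finset.sum_congr rfl fun b _ => by rw [← Finset.mul_sum, hπ.2.2 b]
    linarith

/-- Kantorovich duality (the hard direction), via hyperplane separation. -/
theorem RLF.duality [Nonempty V] {d : V → V → ℝ} (hdnn : ∀ a b, 0 ≤ d a b)
    (hd0 : ∀ a, d a a = 0) (htri : ∀ a b c, d a c ≤ d a b + d b c)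
    {ν₀ ν₁ : V → ℝ} (h0 : ∀ a, 0 ≤ ν₀ a) (h1 : ∀ a, 0 ≤ ν₁ a)
    (hs0 : ∑ a, ν₀ a = 1) (hs1 : ∑ a, ν₁ a = 1)
    {t : ℝ} (ht : t < Wass d ν₀ ν₁) :
    ∃ f : V → ℝ, Lip1 d f ∧ t < (∑ b, f b * ν₁ b) - ∑ a, f a * ν₀ a := by
  -- the linear map sending a plan to (marginal₀, marginal₁, cost)
  set T : ((V × V) → ℝ) →ₗ[ℝ] (V → ℝ) × (V → ℝ) × ℝ :=
    { toFun := fun π => (fun a => ∑ b, π (a, b), fun b => ∑ a, π (a, b),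
        ∑ p, d p.1 p.2 * π p)
      map_add' := by
        intro π ρ
        refine Prod.ext (funext fun a => ?_) (Prod.ext (funext fun b => ?_) ?_) <;>
          simp [Finset.sum_add_distrib, mul_add]
      map_smul' := by
        intro c π
        refine Prod.ext (funext fun a => ?_) (Prod.ext (funext fun b => ?_) ?_) <;>
          simp [Finset.mul_sum, mul_left_comm] } with hTdef
  have hTcont : Continuous T := T.continuous_of_finiteDimensional
  set K : Set ((V → ℝ) × (V → ℝ) × ℝ) := T '' stdSimplex ℝ (V × V) with hKdef
  have hKc : IsCompact K := (isCompact_stdSimplex ℝ (V × V)).image hTcont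
  have hKconv : Convex ℝ K := (convex_stdSimplex ℝ _).linear_image T
  have hp : ((ν₀, ν₁, t) : (V → ℝ) × (V → ℝ) × ℝ) ∉ K := by
    rintro ⟨π, hπ, hTπ⟩
    have e1 : (fun a => ∑ b, π (a, b)) = ν₀ := congrArg Prod.fst hTπ
    have e2 : (fun b => ∑ a, π (a, b)) = ν₁ := congrArg (fun w => w.2.1) hTπ
    have e3 : (∑ p, d p.1 p.2 * π p) = t := congrArg (fun w => w.2.2) hTπ
    have hcp : IsCoupling (fun a b => π (a, b)) ν₀ ν₁ :=
      ⟨fun a b => hπ.1 (a, b), fun a => congrFun e1 a, fun b => congrFun e2 b⟩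
    have hW := RLF.wass_le hdnn hcp
    have e4 : (∑ p : V × V, d p.1 p.2 * π p) = ∑ a, ∑ b, d a b * π (a, b) :=
      Fintype.sum_prod_type _
    rw [← e4, e3] at hW
    linarith
  obtain ⟨F, u, hFp, hFK⟩ := geometric_hahn_banach_point_closed hKconv hKc.isClosed hp
  -- decompose the separating functional
  have lin_eval : ∀ (L : (V → ℝ) →ₗ[ℝ] ℝ) (v : V → ℝ),
      L v = ∑ a, v a * L (Pi.single a 1) := by
    intro L v
    have hv : v = ∑ a, v a • (Pi.single a (1:ℝ) : V → ℝ) := by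
      funext i
      simp only [Finset.sum_apply, Pi.smul_apply, Pi.single_apply, smul_eq_mul,
        mul_ite, mul_one, mul_zero]
      rw [Finset.sum_ite_eq Finset.univ i]
      simp
    conv_lhs => rw [hv]
    rw [map_sum]
    simp [smul_eq_mul]
  set φ : V → ℝ := fun a => F (Pi.single a 1, 0, 0) with hφdef
  set ψ : V → ℝ := fun b => F ((0 : V → ℝ), Pi.single b 1, (0:ℝ)) with hψdef
  set s : ℝ := F (0, 0, 1) with hsdef
  have hFdec : ∀ w : (V → ℝ) × (V → ℝ) × ℝ,
      F w = (∑ a, w.1 a * φ a) + (∑ b, w.2.1 b * ψ b) + w.2.2 * s := by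
    intro w
    have hw : w = ((w.1, 0, 0) : (V → ℝ) × (V → ℝ) × ℝ) + (0, w.2.1, 0) + (0, 0, w.2.2) := by
      refine Prod.ext (by simp) (Prod.ext (by simp) (by simp))
    have h1 : F (w.1, 0, 0) = ∑ a, w.1 a * φ a := by
      have := lin_eval (F.toLinearMap.comp (LinearMap.inl ℝ (V → ℝ) ((V → ℝ) × ℝ))) w.1
      simpa [hφdef, ← Prod.mk_zero_zero] using this
    have h2 : F ((0 : V → ℝ), w.2.1, (0:ℝ)) = ∑ b, w.2.1 b * ψ b := by
      have := lin_eval (F.toLinearMap.comp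
        ((LinearMap.inr ℝ (V → ℝ) ((V → ℝ) × ℝ)).comp (LinearMap.inl ℝ (V → ℝ) ℝ))) w.2.1
      simpa using this
    have h3 : F ((0 : V → ℝ), (0 : V → ℝ), w.2.2) = w.2.2 * s := by
      have := F.map_smul w.2.2 ((0, 0, 1) : (V → ℝ) × (V → ℝ) × ℝ)
      simpa [Prod.smul_def, smul_eq_mul] using this
    calc F w = F ((w.1, 0, 0) : (V → ℝ) × (V → ℝ) × ℝ) + F (0, w.2.1, 0) + F (0, 0, w.2.2) := by
          rw [← map_add, ← map_add, ← hw]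
      _ = _ := by rw [h1, h2, h3]
  -- the point-mass constraints
  have hC1 : ∀ a b, u < φ a + ψ b + d a b * s := by
    intro a b
    have hδ : (Pi.single ((a,b) : V × V) (1:ℝ)) ∈ stdSimplex ℝ (V × V) := by
      constructor
      · intro p
        rw [Pi.single_apply]
        split <;> norm_num
      · rw [Fintype.sum_pi_single' ((a,b) : V × V) (1:ℝ)]
    have hTK : T (Pi.single ((a,b) : V × V) (1:ℝ)) ∈ K := Set.mem_image_of_mem _ hδ
    have hgt := hFK _ hTK
    rw [hFdec] at hgt
    simp only [hTdef, LinearMap.coe_mk, AddHom.coe_mk] at hgt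
    have c1 : ∑ a', (∑ b', (Pi.single ((a,b) : V × V) (1:ℝ) : V × V → ℝ) (a', b')) * φ a' = φ a := by
      have : ∀ a', (∑ b', (Pi.single ((a,b) : V × V) (1:ℝ) : V × V → ℝ) (a', b'))
          = if a' = a then 1 else 0 := by
        intro a'
        by_cases h : a' = a
        · subst h
          simp only [Pi.single_apply, Prod.mk.injEq, true_and, if_pos rfl]
          rw [Finset.sum_ite_eq' Finset.univ b]
          simp
        · simp [Pi.single_apply, Prod.mk.injEq, h]
      rw [Finset.sum_congr rfl fun a' _ => by rw [this a']]
      simp [ite_mul]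
    have c2 : ∑ b', (∑ a', (Pi.single ((a,b) : V × V) (1:ℝ) : V × V → ℝ) (a', b')) * ψ b' = ψ b := by
      have : ∀ b', (∑ a', (Pi.single ((a,b) : V × V) (1:ℝ) : V × V → ℝ) (a', b'))
          = if b' = b then 1 else 0 := by
        intro b'
        by_cases h : b' = b
        · subst h
          simp only [Pi.single_apply, Prod.mk.injEq, and_true, if_pos rfl]
          rw [Finset.sum_ite_eq' Finset.univ a]
          simp
        · simp [Pi.single_apply, Prod.mk.injEq, h]
      rw [Finset.sum_congr rfl fun b' _ => by rw [this b']]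
      simp [ite_mul]
    have c3 : ∑ p : V × V, d p.1 p.2 * (Pi.single ((a,b) : V × V) (1:ℝ) : V × V → ℝ) p = d a b := by
      simp only [Pi.single_apply, mul_ite, mul_one, mul_zero]
      rw [Finset.sum_ite_eq' Finset.univ ((a,b) : V × V)]
      simp
    simpa [c1, c2, c3] using hgt
  have hC2 : (∑ a, ν₀ a * φ a) + (∑ b, ν₁ b * ψ b) + t * s < u := by
    have := hFdec ((ν₀, ν₁, t) : (V → ℝ) × (V → ℝ) × ℝ)
    rw [this] at hFp
    exact hFp
  -- positivity of the cost multiplier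
  have hspos : 0 < s := by
    set π₀ : (V × V) → ℝ := fun p => ν₀ p.1 * ν₁ p.2 with hπ₀def
    have hπ₀ : π₀ ∈ stdSimplex ℝ (V × V) := by
      constructor
      · intro p; exact mul_nonneg (h0 _) (h1 _)
      · rw [Fintype.sum_prod_type]
        simp only [hπ₀def, ← Finset.mul_sum, hs1, mul_one]
        exact hs0
    set c₀ : ℝ := ∑ p : V × V, d p.1 p.2 * π₀ p with hc₀def
    have hTπ₀ : T π₀ = ((ν₀, ν₁, c₀) : (V → ℝ) × (V → ℝ) × ℝ) := by
      refine Prod.ext (funext fun a => ?_) (Prod.ext (funext fun b => ?_) rfl)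
      · simp only [hTdef, LinearMap.coe_mk, AddHom.coe_mk, hπ₀def, ← Finset.mul_sum, hs1,
          mul_one]
      · simp only [hTdef, LinearMap.coe_mk, AddHom.coe_mk, hπ₀def, ← Finset.sum_mul, hs0,
          one_mul]
    have hu : u < (∑ a, ν₀ a * φ a) + (∑ b, ν₁ b * ψ b) + c₀ * s := by
      have := hFK _ (Set.mem_image_of_mem T hπ₀)
      rw [hTπ₀, hFdec] at this
      exact this
    have hWc₀ : Wass d ν₀ ν₁ ≤ c₀ := by
      have := RLF.wass_le hdnn (RLF.prod_coupling h0 h1 hs0 hs1)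
      have e4 : (∑ p : V × V, d p.1 p.2 * π₀ p) = ∑ a, ∑ b, d a b * (ν₀ a * ν₁ b) :=
        Fintype.sum_prod_type _
      rw [hc₀def, e4]
      exact this
    have htc₀ : t < c₀ := lt_of_lt_of_le ht hWc₀
    by_contra hns
    push_neg at hns
    have : c₀ * s ≤ t * s := mul_le_mul_of_nonpos_right htc₀.le hns
    linarith
  -- rescale the dual variables
  set u' : V → ℝ := fun a => φ a / s with hu'def
  set ψ' : V → ℝ := fun b => ψ b / s with hψ'def
  set β : ℝ := u / s with hβdef
  have hC1' : ∀ a b, β < u' a + ψ' b + d a b := by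
    intro a b
    have := (div_lt_div_iff_of_pos_right hspos).mpr (hC1 a b)
    rw [add_div, add_div, mul_div_cancel_right₀ _ hspos.ne'] at this
    exact this
  have hC2' : (∑ a, ν₀ a * u' a) + (∑ b, ν₁ b * ψ' b) + t < β := by
    have := (div_lt_div_iff_of_pos_right hspos).mpr hC2
    rw [add_div, add_div, mul_div_cancel_right₀ _ hspos.ne', Finset.sum_div,
      Finset.sum_div] at this
    simpa [hu'def, hψ'def, mul_div_assoc] using this
  -- the dual potential
  set f : V → ℝ := fun b => Finset.univ.inf' Finset.univ_nonempty (fun a => d a b + u' a)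
    with hfdef
  have hfle : ∀ a b, f b ≤ d a b + u' a := fun a b =>
    Finset.inf'_le _ (Finset.mem_univ a)
  have hfge : ∀ b, β - ψ' b ≤ f b := by
    intro b
    apply Finset.le_inf'
    intro a _
    have := hC1' a b
    linarith
  have hLip : Lip1 d f := by
    intro a b
    obtain ⟨a₀, _, ha₀⟩ := Finset.exists_mem_eq_inf' (Finset.univ_nonempty)
      (fun a' => d a' a + u' a')
    have h1 : f b ≤ d a₀ b + u' a₀ := hfle a₀ b
    have h2 : d a₀ b ≤ d a₀ a + d a b := htri a₀ a b
    have h3 : f a = d a₀ a + u' a₀ := ha₀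
    linarith
  have hfub : ∀ a, f a ≤ u' a := by
    intro a
    have := hfle a a
    rwa [hd0 a, zero_add] at this
  refine ⟨f, hLip, ?_⟩
  have h1 : ∑ b, (β - ψ' b) * ν₁ b ≤ ∑ b, f b * ν₁ b :=
    Finset.sum_le_sum fun b _ => mul_le_mul_of_nonneg_right (hfge b) (h1 b)
  have h2 : ∑ a, f a * ν₀ a ≤ ∑ a, u' a * ν₀ a :=
    Finset.sum_le_sum fun a _ => mul_le_mul_of_nonneg_right (hfub a) (h0 a)
  have e1 : ∑ b, (β - ψ' b) * ν₁ b = β - ∑ b, ν₁ b * ψ' b := by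
    rw [Finset.sum_congr rfl (fun b _ => sub_mul β (ψ' b) (ν₁ b)),
      Finset.sum_sub_distrib, ← Finset.mul_sum, hs1, mul_one]
    congr 1
    exact Finset.sum_congr rfl fun b _ => mul_comm _ _
  have e2 : ∑ a, u' a * ν₀ a = ∑ a, ν₀ a * u' a :=
    Finset.sum_congr rfl fun a _ => mul_comm _ _
  linarith

theorem RLF.arith1 {d W g A e : ℝ} (hd : 0 < d) (he : 0 < e)
    (h1 : W ≤ g - e * A + e ^ 2) (h2 : g ≤ d) : A / d - e / d ≤ (1 - W / d) / e := by
  have key : (A / d - e / d) * e ≤ 1 - W / d := by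
    have e1 : (A / d - e / d) * e = (e * A - e ^ 2) / d := by
      field_simp
    have e3 : 1 - (g - e * A + e ^ 2) / d = (d - g + e * A - e ^ 2) / d := by
      field_simp
      ring
    have e4 : (e * A - e ^ 2) / d ≤ (d - g + e * A - e ^ 2) / d :=
      (div_le_div_iff_of_pos_right hd).mpr (by linarith)
    have e6 : W / d ≤ (g - e * A + e ^ 2) / d :=
      (div_le_div_iff_of_pos_right hd).mpr (by linarith)
    linarith [e1, e3, e4, e6]
  calc A / d - e / d = (A / d - e / d) * e / e := by
        field_simp
    _ ≤ (1 - W / d) / e := (div_le_div_iff_of_pos_right he).mpr key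

end Aux

/-- limit-free formula for the directed Ricci curvature. -/
theorem ricci_limit_free_formula
    {V : Type*} [Fintype V] (μ : V → V → ℝ) (m : V → ℝ)
    (hnn : Nonneg μ) (hsimple : IsSimpleW μ) (hconn : StronglyConnectedW μ)
    (hm : IsPerron μ m) (x y : V) (hxy : x ≠ y) (k : ℝ)
    (hk : Tendsto (fun ε => kappaEps μ m ε x y / ε) (𝓝[>] (0:ℝ)) (𝓝 k)) :
    k = sInf {r : ℝ | ∃ f, Lip1 (gdist μ) f ∧ (f y - f x) / gdist μ x y = 1 ∧
          r = (chungL (meanK μ m) f y - chungL (meanK μ m) f x) / gdist μ x y} := by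
  classical
  have hVne : Nonempty V := ⟨x⟩
  have hv : ∀ w, 0 < vdeg μ w := fun w => RLF.vdeg_pos hnn (RLF.exists_out hconn hxy w)
  have hPnn : ∀ w z, 0 ≤ meanK μ m w z := fun w z => RLF.meanK_nonneg hnn hm hv w z
  have hProw : ∀ w, ∑ z, meanK μ m w z = 1 := RLF.sum_meanK hm hv
  have hPdiag : ∀ w, meanK μ m w w = 0 := RLF.meanK_self hsimple
  have hdnn : ∀ a b, 0 ≤ gdist μ a b := RLF.gdist_nonneg μ hconn
  have htri := RLF.gdist_triangle μ hconn
  have hd0 : ∀ a, gdist μ a a = 0 := RLF.gdist_self μ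
  have hdx1 : 1 ≤ gdist μ x y := RLF.one_le_gdist μ hconn hxy
  have hdpos : 0 < gdist μ x y := lt_of_lt_of_le one_pos hdx1
  set D : ℝ := ∑ p : V × V, gdist μ p.1 p.2 with hD
  have hDnn : 0 ≤ D := Finset.sum_nonneg fun p _ => hdnn p.1 p.2
  have hdleD : ∀ a b, gdist μ a b ≤ D := fun a b =>
    Finset.single_le_sum (f := fun p : V × V => gdist μ p.1 p.2)
      (fun p _ => hdnn p.1 p.2) (Finset.mem_univ (a, b))
  -- probability measure facts for ν^ε
  have hnuprob : ∀ (w : V) (ε : ℝ), 0 < ε → ε ≤ 1 →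
      (∀ z, 0 ≤ nu (meanK μ m) ε w z) ∧ ∑ z, nu (meanK μ m) ε w z = 1 := fun w ε h0 h1 =>
    ⟨RLF.nu_nonneg (hPnn w) h0.le h1, RLF.sum_nu (hPdiag w) (hProw w) ε⟩
  -- Laplacian bounds for Lipschitz functions
  have hLbound : ∀ f : V → ℝ, Lip1 (gdist μ) f → ∀ w,
      -D ≤ chungL (meanK μ m) f w ∧ chungL (meanK μ m) f w ≤ D := by
    intro f hf w
    have hrepr : chungL (meanK μ m) f w = ∑ z, meanK μ m w z * (f w - f z) := by
      unfold chungL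
      rw [Finset.sum_congr rfl fun z _ => mul_sub (meanK μ m w z) (f w) (f z),
        Finset.sum_sub_distrib, ← Finset.sum_mul, hProw w, one_mul]
    constructor
    · rw [hrepr]
      have : ∑ z, meanK μ m w z * (-D) ≤ ∑ z, meanK μ m w z * (f w - f z) := by
        apply Finset.sum_le_sum
        intro z _
        apply mul_le_mul_of_nonneg_left _ (hPnn w z)
        have := hf w z
        have := hdleD w z
        linarith
      rw [← Finset.sum_mul, hProw w, one_mul] at this
      exact this
    · rw [hrepr]
      have : ∑ z, meanK μ m w z * (f w - f z) ≤ ∑ z, meanK μ m w z * D := by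
        apply Finset.sum_le_sum
        intro z _
        apply mul_le_mul_of_nonneg_left _ (hPnn w z)
        have := hf z w
        have := hdleD z w
        linarith
      rw [← Finset.sum_mul, hProw w, one_mul] at this
      exact this
  set S : Set ℝ := {r : ℝ | ∃ f, Lip1 (gdist μ) f ∧ (f y - f x) / gdist μ x y = 1 ∧
      r = (chungL (meanK μ m) f y - chungL (meanK μ m) f x) / gdist μ x y} with hS
  -- the set is nonempty
  have hSne : S.Nonempty := by
    refine ⟨_, fun z => gdist μ x z, fun a b => ?_, ?_, rfl⟩
    · have := htri x a b
      linarith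
    · show (gdist μ x y - gdist μ x x) / gdist μ x y = 1
      rw [hd0 x, sub_zero]
      exact div_self hdpos.ne'
  -- the set is bounded below
  have hSbdd : BddBelow S := by
    refine ⟨-(2 * D), fun r hr => ?_⟩
    obtain ⟨f, hf, -, rfl⟩ := hr
    have h1 := (hLbound f hf y).1
    have h2 := (hLbound f hf x).2
    rw [le_div_iff₀ hdpos]
    nlinarith
  -- upper bound : k ≤ r for every r ∈ S
  have hub : ∀ r ∈ S, k ≤ r := by
    rintro r ⟨f, hf, hfnorm, rfl⟩
    have hfd : f y - f x = gdist μ x y := by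
      field_simp at hfnorm
      linarith
    refine le_of_tendsto hk ?_
    filter_upwards [Ioc_mem_nhdsGT_of_mem (Set.mem_Ico.mpr ⟨le_refl (0:ℝ), one_pos⟩)]
    intro ε hε
    obtain ⟨hε0, hε1⟩ := hε
    obtain ⟨hnux, hsux⟩ := hnuprob x ε hε0 hε1
    obtain ⟨hnuy, hsuy⟩ := hnuprob y ε hε0 hε1
    have hcoup := RLF.prod_coupling hnux hnuy hsux hsuy
    have hW := RLF.le_wass (d := gdist μ) hf ⟨_, hcoup⟩
    have ey : ∑ b, f b * nu (meanK μ m) ε y b = f y - ε * chungL (meanK μ m) f y := by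
      rw [Finset.sum_congr rfl fun z _ => mul_comm (f z) _]
      exact RLF.sum_nu_mul (hPdiag y) ε f
    have ex : ∑ a, f a * nu (meanK μ m) ε x a = f x - ε * chungL (meanK μ m) f x := by
      rw [Finset.sum_congr rfl fun z _ => mul_comm (f z) _]
      exact RLF.sum_nu_mul (hPdiag x) ε f
    rw [ey, ex] at hW
    -- hW : (f y - ε ℒf y) - (f x - ε ℒf x) ≤ W
    have hκ : kappaEps μ m ε x y
        = 1 - Wass (gdist μ) (nu (meanK μ m) ε x) (nu (meanK μ m) ε y) / gdist μ x y := rfl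
    rw [hκ, div_le_iff₀ hε0]
    set W := Wass (gdist μ) (nu (meanK μ m) ε x) (nu (meanK μ m) ε y) with hWdef
    have hnum : chungL (meanK μ m) f y - chungL (meanK μ m) f x
        = (chungL (meanK μ m) f y - chungL (meanK μ m) f x) / gdist μ x y * gdist μ x y :=
      (div_mul_cancel₀ _ hdpos.ne').symm
    have hWlb : gdist μ x y
        - ε * ((chungL (meanK μ m) f y - chungL (meanK μ m) f x) / gdist μ x y * gdist μ x y)
        ≤ W := by
      rw [← hnum]
      linarith
    have hWd : 1 - ε * ((chungL (meanK μ m) f y - chungL (meanK μ m) f x) / gdist μ x y)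
        ≤ W / gdist μ x y := by
      rw [le_div_iff₀ hdpos]
      nlinarith
    nlinarith
  -- lower bound : sInf S ≤ k, via near-optimal Kantorovich potentials
  have hlb : sInf S ≤ k := by
    set ε : ℕ → ℝ := fun n => ((n : ℝ) + 1)⁻¹ with hε
    have hεpos : ∀ n, 0 < ε n := fun n => by positivity
    have hεle1 : ∀ n, ε n ≤ 1 := by
      intro n
      rw [hε]
      apply inv_le_one_of_one_le₀
      push_cast
      linarith [Nat.cast_nonneg (α := ℝ) n]
    have hεto : Tendsto ε atTop (𝓝 0) := by
      have := tendsto_one_div_add_atTop_nhds_zero_nat (𝕜 := ℝ)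
      simpa [hε, one_div] using this
    have hseq : Tendsto ε atTop (𝓝[>] (0:ℝ)) :=
      tendsto_nhdsWithin_of_tendsto_nhds_of_eventually_within _ hεto
        (Filter.Eventually.of_forall fun n => hεpos n)
    have hkseq : Tendsto (fun n => kappaEps μ m (ε n) x y / ε n) atTop (𝓝 k) :=
      hk.comp hseq
    -- choose near-optimal potentials
    have hdual : ∀ n : ℕ, ∃ f : V → ℝ, Lip1 (gdist μ) f ∧
        Wass (gdist μ) (nu (meanK μ m) (ε n) x) (nu (meanK μ m) (ε n) y) - (ε n) ^ 2 <
          (∑ b, f b * nu (meanK μ m) (ε n) y b) - ∑ a, f a * nu (meanK μ m) (ε n) x a := by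
      intro n
      obtain ⟨hnux, hsux⟩ := hnuprob x (ε n) (hεpos n) (hεle1 n)
      obtain ⟨hnuy, hsuy⟩ := hnuprob y (ε n) (hεpos n) (hεle1 n)
      exact RLF.duality hdnn hd0 htri hnux hnuy hsux hsuy
        (sub_lt_self _ (by positivity))
    choose f0 hf0lip hf0 using hdual
    set f : ℕ → V → ℝ := fun n z => f0 n z - f0 n x with hfdef
    have hflip : ∀ n, Lip1 (gdist μ) (f n) := by
      intro n a b
      have := hf0lip n a b
      simp only [hfdef]
      linarith
    have hfx : ∀ n, f n x = 0 := by
      intro n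
      simp [hfdef]
    -- the key inequality
    have hkey : ∀ n, Wass (gdist μ) (nu (meanK μ m) (ε n) x) (nu (meanK μ m) (ε n) y)
        ≤ (f n y - f n x)
          - (ε n) * (chungL (meanK μ m) (f n) y - chungL (meanK μ m) (f n) x) + (ε n) ^ 2 := by
      intro n
      have h := hf0 n
      have ey : ∑ b, f0 n b * nu (meanK μ m) (ε n) y b
          = f0 n y - ε n * chungL (meanK μ m) (f0 n) y := by
        rw [Finset.sum_congr rfl fun z _ => mul_comm (f0 n z) _]
        exact RLF.sum_nu_mul (hPdiag y) (ε n) (f0 n)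
      have ex : ∑ a, f0 n a * nu (meanK μ m) (ε n) x a
          = f0 n x - ε n * chungL (meanK μ m) (f0 n) x := by
        rw [Finset.sum_congr rfl fun z _ => mul_comm (f0 n z) _]
        exact RLF.sum_nu_mul (hPdiag x) (ε n) (f0 n)
      have hcy : chungL (meanK μ m) (f n) y = chungL (meanK μ m) (f0 n) y :=
        RLF.chungL_sub_const (hProw y) (f0 n) (f0 n x)
      have hcx : chungL (meanK μ m) (f n) x = chungL (meanK μ m) (f0 n) x :=
        RLF.chungL_sub_const (hProw x) (f0 n) (f0 n x)
      have hfy : f n y - f n x = f0 n y - f0 n x := by simp [hfdef]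
      rw [hfy, hcy, hcx]
      rw [ey, ex] at h
      linarith
    -- inequality (a): the curvature dominates the Laplacian difference
    have ha : ∀ n, (chungL (meanK μ m) (f n) y - chungL (meanK μ m) (f n) x) / gdist μ x y
        - ε n / gdist μ x y ≤ kappaEps μ m (ε n) x y / ε n := by
      intro n
      have hκ : kappaEps μ m (ε n) x y
          = 1 - Wass (gdist μ) (nu (meanK μ m) (ε n) x) (nu (meanK μ m) (ε n) y)
            / gdist μ x y := rfl
      rw [hκ]
      exact RLF.arith1 hdpos (hεpos n) (hkey n) (by linarith [hflip n x y])
    -- (b): f n y - f n x → d(x,y)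
    have hκ0 : Tendsto (fun n => kappaEps μ m (ε n) x y) atTop (𝓝 0) := by
      have h1 : Tendsto (fun n => ε n * (kappaEps μ m (ε n) x y / ε n)) atTop (𝓝 (0 * k)) :=
        hεto.mul hkseq
      rw [zero_mul] at h1
      refine h1.congr fun n => ?_
      field_simp
      exact mul_div_cancel_left₀ _ (hεpos n).ne'
    have hgub : ∀ n, gdist μ x y - (f n y - f n x)
        ≤ gdist μ x y * kappaEps μ m (ε n) x y + ε n * (2 * D) + ε n := by
      intro n
      have hκW : gdist μ x y * kappaEps μ m (ε n) x y
          = gdist μ x y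
            - Wass (gdist μ) (nu (meanK μ m) (ε n) x) (nu (meanK μ m) (ε n) y) := by
        have hκ : kappaEps μ m (ε n) x y
            = 1 - Wass (gdist μ) (nu (meanK μ m) (ε n) x) (nu (meanK μ m) (ε n) y)
              / gdist μ x y := rfl
        rw [hκ]
        field_simp
      have hA1 := (hLbound (f n) (hflip n) y).1
      have hA2 := (hLbound (f n) (hflip n) x).2
      have hA3 := (hLbound (f n) (hflip n) y).2
      have hA4 := (hLbound (f n) (hflip n) x).1
      have hsq : (ε n) ^ 2 ≤ ε n := by nlinarith [hεpos n, hεle1 n]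
      nlinarith [hkey n, hεpos n]
    have hbto : Tendsto (fun n => gdist μ x y * kappaEps μ m (ε n) x y + ε n * (2 * D) + ε n)
        atTop (𝓝 0) := by
      have h1 : Tendsto (fun n => gdist μ x y * kappaEps μ m (ε n) x y) atTop
          (𝓝 (gdist μ x y * 0)) := tendsto_const_nhds.mul hκ0
      have h2 : Tendsto (fun n => ε n * (2 * D)) atTop (𝓝 (0 * (2 * D))) :=
        hεto.mul tendsto_const_nhds
      have := (h1.add h2).add hεto
      simpa using this
    have hgto : Tendsto (fun n => f n y - f n x) atTop (𝓝 (gdist μ x y)) := by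
      have hlow : Tendsto (fun n => gdist μ x y
          - (gdist μ x y * kappaEps μ m (ε n) x y + ε n * (2 * D) + ε n)) atTop
          (𝓝 (gdist μ x y)) := by
        have h0 : Tendsto (fun _ : ℕ => gdist μ x y) atTop (𝓝 (gdist μ x y)) :=
          tendsto_const_nhds
        have := h0.sub hbto
        simpa using this
      refine tendsto_of_tendsto_of_tendsto_of_le_of_le hlow tendsto_const_nhds
        (fun n => by linarith [hgub n]) (fun n => by linarith [hflip n x y])
    -- compactness: extract a convergent subsequence
    have hmem : ∀ n, f n ∈ Set.pi Set.univ fun _ : V => Set.Icc (-D) D := by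
      intro n
      rw [Set.mem_univ_pi]
      intro z
      constructor
      · have h1 := hflip n z x
        have h2 := hdleD z x
        rw [hfx n] at h1
        linarith
      · have h1 := hflip n x z
        have h2 := hdleD x z
        rw [hfx n] at h1
        linarith
    obtain ⟨glim, -, φ, hφmono, hφlim⟩ :=
      (isCompact_univ_pi fun _ : V => isCompact_Icc).tendsto_subseq hmem
    have hpt : ∀ z, Tendsto (fun n => f (φ n) z) atTop (𝓝 (glim z)) := by
      intro z
      exact tendsto_pi_nhds.mp hφlim z
    have hLipLim : Lip1 (gdist μ) glim := by
      intro a b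
      exact le_of_tendsto ((hpt b).sub (hpt a))
        (Filter.Eventually.of_forall fun n => hflip (φ n) a b)
    have hglimd : glim y - glim x = gdist μ x y :=
      tendsto_nhds_unique ((hpt y).sub (hpt x)) (hgto.comp hφmono.tendsto_atTop)
    have hch : ∀ w, Tendsto (fun n => chungL (meanK μ m) (f (φ n)) w) atTop
        (𝓝 (chungL (meanK μ m) glim w)) := by
      intro w
      unfold chungL
      exact (hpt w).sub (tendsto_finset_sum _ fun z _ => tendsto_const_nhds.mul (hpt z))
    have hAlim : Tendsto (fun n => (chungL (meanK μ m) (f (φ n)) y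
        - chungL (meanK μ m) (f (φ n)) x) / gdist μ x y - ε (φ n) / gdist μ x y) atTop
        (𝓝 ((chungL (meanK μ m) glim y - chungL (meanK μ m) glim x) / gdist μ x y - 0)) := by
      refine Tendsto.sub ?_ ?_
      · exact ((hch y).sub (hch x)).div_const _
      · have := (hεto.comp hφmono.tendsto_atTop).div_const (gdist μ x y)
        simpa using this
    have hfinal : (chungL (meanK μ m) glim y - chungL (meanK μ m) glim x) / gdist μ x y ≤ k := by
      have := le_of_tendsto_of_tendsto' hAlim (hkseq.comp hφmono.tendsto_atTop)
        (fun n => ha (φ n))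
      linarith
    refine le_trans (csInf_le hSbdd ?_) hfinal
    exact ⟨glim, hLipLim, by rw [hglimd]; exact div_self hdpos.ne', rfl⟩
  exact le_antisymm (le_csInf hSne hub) hlb
end
end

section
/- For the (α,β)-weighted Cartesian product, the distance function is the ℓ¹-sum: d_{(α,β)}((x,x'),(y,y')) = d(x,y) + d'(x',y'), and for functions f : V → ℝ, f' : V' → ℝ and 𝐟(x,x') := f(x) + f'(x'), the product Laplacian satisfies ℒ_{(α,β)}𝐟(x,x') = (β/(α+β))ℒf(x) + (α/(α+β))ℒ'f'(x'). -/
open Finset Filter Topology MeasureTheory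
open scoped Classical

noncomputable section

variable {V : Type*}

/-- The `(α,β)`-weighted Cartesian product edge weight. -/
def prodW {V V' : Type*} [Fintype V] [Fintype V']
    (μ : V → V → ℝ) (μ' : V' → V' → ℝ) (α β : ℝ) :
    V × V' → V × V' → ℝ :=
  fun p q =>
    β * vdeg μ' p.2 * μ p.1 q.1 * (if q.2 = p.2 then 1 else 0)
      + α * vdeg μ p.1 * μ' p.2 q.2 * (if q.1 = p.1 then 1 else 0)

-- AUX START
set_option linter.unusedSectionVars false
set_option linter.deprecated false

section Aux1
variable {W : Type*} [Fintype W]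

lemma perron_nonempty {μ : W → W → ℝ} {m : W → ℝ} (hm : IsPerron μ m) : Nonempty W := by
  by_contra h
  rw [not_nonempty_iff] at h
  have h1 := hm.2.1
  rw [Finset.univ_eq_empty, Finset.sum_empty] at h1
  exact one_ne_zero h1.symm

lemma vdeg_nonneg {μ : W → W → ℝ} (hnn : Nonneg μ) (x : W) : 0 ≤ vdeg μ x :=
  Finset.sum_nonneg fun y _ => hnn x y

lemma vdeg_pos_of_ne {μ : W → W → ℝ} (hnn : Nonneg μ) (hc : StronglyConnectedW μ)
    {x b : W} (hb : b ≠ x) : 0 < vdeg μ x := by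
  obtain ⟨n, c, hc0, hcn, hstep⟩ := hc x b
  have hn : n ≠ 0 := by rintro rfl; exact hb (hcn.symm.trans hc0)
  have h1 : 0 < μ x (c 1) := by
    have := hstep 0 (Nat.pos_of_ne_zero hn); rwa [hc0] at this
  have hle : μ x (c 1) ≤ vdeg μ x :=
    Finset.single_le_sum (f := fun y => μ x y) (fun y _ => hnn x y) (Finset.mem_univ _)
  linarith

lemma transP_nonneg {μ : W → W → ℝ} (hnn : Nonneg μ) (x y : W) : 0 ≤ transP μ x y :=
  div_nonneg (hnn x y) (vdeg_nonneg hnn x)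

lemma transP_pos {μ : W → W → ℝ} {x y : W} (hdeg : 0 < vdeg μ x) (h : 0 < μ x y) :
    0 < transP μ x y := div_pos h hdeg

lemma rowsum_transP {μ : W → W → ℝ} {x : W} (hdeg : vdeg μ x ≠ 0) :
    ∑ y, transP μ x y = 1 := by
  unfold transP
  rw [← Finset.sum_div]
  exact div_self hdeg

lemma hasPathLen_cons {μ : W → W → ℝ} {x z y : W} {n : ℕ}
    (hxz : 0 < μ x z) (h : HasPathLen μ z y n) : HasPathLen μ x y (n + 1) := by
  obtain ⟨p, hp0, hpn, hs⟩ := h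
  refine ⟨fun i => Nat.casesOn i x p, rfl, hpn, ?_⟩
  intro i hi
  cases i with
  | zero => simpa [hp0] using hxz
  | succ j => exact hs j (by omega)

lemma gdist_eq {μ : W → W → ℝ} {x y : W} (h : ∃ n, HasPathLen μ x y n) :
    gdist μ x y = (Nat.find h : ℝ) := by
  unfold gdist
  apply le_antisymm
  · apply csInf_le
    · refine ⟨0, ?_⟩
      rintro r ⟨n, rfl, -⟩
      positivity
    · exact ⟨Nat.find h, rfl, Nat.find_spec h⟩
  · refine le_csInf ⟨(Nat.find h : ℝ), ?_⟩ ?_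
    · exact ⟨Nat.find h, rfl, Nat.find_spec h⟩
    rintro r ⟨n, rfl, hn⟩
    exact_mod_cast Nat.find_le hn

lemma perron_unique {μ : W → W → ℝ} (hnn : Nonneg μ) (hc : StronglyConnectedW μ)
    (hdeg : ∀ x, 0 < vdeg μ x) {m M : W → ℝ} (hm : IsPerron μ m) (hM : IsPerron μ M)
    (x : W) : M x = m x := by
  obtain ⟨x₀, -, hx₀⟩ := Finset.exists_min_image Finset.univ (fun z => M z / m z)
    ⟨x, Finset.mem_univ x⟩
  set c := M x₀ / m x₀ with hcdef
  have hlb : ∀ w, c * m w ≤ M w := by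
    intro w
    exact (le_div_iff₀ (hm.1 w)).mp (hx₀ w (Finset.mem_univ w))
  have hstep : ∀ z, M z = c * m z → ∀ y, 0 < μ y z → M y = c * m y := by
    intro z hz y hy
    have hsum : ∑ w, (M w - c * m w) * transP μ w z = 0 := by
      have he : ∑ w, (M w - c * m w) * transP μ w z
          = (∑ w, M w * transP μ w z) - c * ∑ w, m w * transP μ w z := by
        rw [Finset.mul_sum, ← Finset.sum_sub_distrib]
        exact Finset.sum_congr rfl fun w _ => by ring
      rw [he, ← (hM.2.2 z), ← (hm.2.2 z), hz]
      ring
    have hterm : ∀ w ∈ Finset.univ, (0:ℝ) ≤ (M w - c * m w) * transP μ w z :=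
      fun w _ => mul_nonneg (by linarith [hlb w]) (transP_nonneg hnn w z)
    have h0 := (Finset.sum_eq_zero_iff_of_nonneg hterm).mp hsum y (Finset.mem_univ y)
    have hP : 0 < transP μ y z := transP_pos (hdeg y) hy
    rcases mul_eq_zero.mp h0 with h | h
    · linarith
    · exact absurd h (ne_of_gt hP)
  have hpath : ∀ n y, HasPathLen μ y x₀ n → M y = c * m y := by
    intro n
    induction n with
    | zero =>
      rintro y ⟨p, hp0, hpn, -⟩
      have hyx : y = x₀ := hp0 ▸ hpn
      rw [hyx, hcdef, div_mul_cancel₀ _ (ne_of_gt (hm.1 x₀))]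
    | succ n ih =>
      rintro y ⟨p, hp0, hpn, hs⟩
      have htail : HasPathLen μ (p 1) x₀ n :=
        ⟨fun i => p (i + 1), rfl, hpn, fun i hi => hs (i + 1) (by omega)⟩
      refine hstep (p 1) (ih (p 1) htail) y ?_
      have := hs 0 (Nat.succ_pos n)
      rwa [hp0] at this
  have hall : ∀ y, M y = c * m y := by
    intro y
    obtain ⟨n, hn⟩ := hc y x₀
    exact hpath n y hn
  have hc1 : c = 1 := by
    have h1 : (1:ℝ) = ∑ y, M y := hM.2.1.symm
    have h2 : ∑ y, M y = c * ∑ y, m y := by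
      rw [Finset.mul_sum]
      exact Finset.sum_congr rfl fun y _ => hall y
    rw [h2, hm.2.1, mul_one] at h1
    exact h1.symm
  rw [hall x, hc1, one_mul]

end Aux1

section Aux2
variable {V V' : Type*} [Fintype V] [Fintype V']
variable {μ : V → V → ℝ} {μ' : V' → V' → ℝ} {α β : ℝ}

lemma prodW_nonneg (hnn : Nonneg μ) (hnn' : Nonneg μ') (hα : 0 < α) (hβ : 0 < β) :
    Nonneg (prodW μ μ' α β) := by
  intro p q
  unfold prodW
  have h1 : (0:ℝ) ≤ (if q.2 = p.2 then (1:ℝ) else 0) := by positivity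
  have h2 : (0:ℝ) ≤ (if q.1 = p.1 then (1:ℝ) else 0) := by positivity
  have := vdeg_nonneg hnn p.1
  have := vdeg_nonneg hnn' p.2
  have := hnn p.1 q.1
  have := hnn' p.2 q.2
  positivity

lemma hasPathLen_prod (hnn : Nonneg μ) (hnn' : Nonneg μ')
    (hs : IsSimpleW μ) (hs' : IsSimpleW μ') (hα : 0 < α) (hβ : 0 < β)
    (hdeg : ∀ x, 0 < vdeg μ x) (hdeg' : ∀ x', 0 < vdeg μ' x')
    {x y : V} {x' y' : V'} {k l : ℕ}
    (h : HasPathLen μ x y k) (h' : HasPathLen μ' x' y' l) :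
    HasPathLen (prodW μ μ' α β) (x, x') (y, y') (k + l) := by
  obtain ⟨p, hp0, hpk, hps⟩ := h
  obtain ⟨q, hq0, hql, hqs⟩ := h'
  refine ⟨fun i => if i ≤ k then (p i, x') else (y, q (i - k)), by simp [hp0], ?_, ?_⟩
  · by_cases hl : l = 0
    · subst hl
      simp only [Nat.add_zero, le_refl, if_pos, hpk]
      rw [← hq0, hql]
    · have hkl : ¬ (k + l ≤ k) := by omega
      simp only [hkl, if_false, Nat.add_sub_cancel_left, hql]
  · intro i hi
    dsimp only
    by_cases h1 : i + 1 ≤ k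
    · have h0 : i ≤ k := by omega
      rw [if_pos h0, if_pos h1]
      unfold prodW
      have hμ : 0 < μ (p i) (p (i + 1)) := hps i (by omega)
      have hpos := mul_pos (mul_pos hβ (hdeg' x')) hμ
      have h2 : (0:ℝ) ≤ (if p (i+1) = p i then (1:ℝ) else 0) := by positivity
      have h3 := vdeg_nonneg hnn (p i)
      simp [hs' x']
      nlinarith
    · have hik : k ≤ i := by omega
      have hci : (if i ≤ k then (p i, x') else (y, q (i - k))) = (y, q (i - k)) := by
        by_cases h2 : i ≤ k
        · have : i = k := by omega
          subst this
          simp [hpk, hq0]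
        · simp [h2]
      have hik1 : i + 1 - k = i - k + 1 := by omega
      have hci1 : (if i + 1 ≤ k then (p (i+1), x') else (y, q (i + 1 - k))) = (y, q (i - k + 1)) := by
        rw [if_neg h1, hik1]
      rw [hci, hci1]
      unfold prodW
      have hμ : 0 < μ' (q (i - k)) (q (i - k + 1)) := hqs (i - k) (by omega)
      have hpos := mul_pos (mul_pos hα (hdeg y)) hμ
      have h2 : (0:ℝ) ≤ (if q (i-k+1) = q (i-k) then (1:ℝ) else 0) := by positivity
      have h3 := vdeg_nonneg hnn' (q (i - k))
      simp [hs y]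
      nlinarith

lemma hasPathLen_prod_decomp (hnn : Nonneg μ) (hnn' : Nonneg μ')
    (hs : IsSimpleW μ) (hs' : IsSimpleW μ') (hα : 0 < α) (hβ : 0 < β) :
    ∀ (n : ℕ) (x y : V) (x' y' : V'), HasPathLen (prodW μ μ' α β) (x, x') (y, y') n →
    ∃ k l, k + l ≤ n ∧ HasPathLen μ x y k ∧ HasPathLen μ' x' y' l := by
  intro n
  induction n with
  | zero =>
    rintro x y x' y' ⟨p, hp0, hpn, -⟩
    have hxy : (x, x') = (y, y') := hp0 ▸ hpn
    rw [Prod.mk.injEq] at hxy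
    obtain ⟨h1, h2⟩ := hxy
    exact ⟨0, 0, le_refl 0, ⟨fun _ => x, rfl, h1, fun i hi => absurd hi (by omega)⟩,
      ⟨fun _ => x', rfl, h2, fun i hi => absurd hi (by omega)⟩⟩
  | succ n ih =>
    rintro x y x' y' ⟨p, hp0, hpn, hsp⟩
    have htail : HasPathLen (prodW μ μ' α β) ((p 1).1, (p 1).2) (y, y') n :=
      ⟨fun i => p (i + 1), by simp, hpn, fun i hi => hsp (i + 1) (by omega)⟩
    obtain ⟨k, l, hkl, hk, hl⟩ := ih (p 1).1 y (p 1).2 y' htail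
    have h0 := hsp 0 (Nat.succ_pos n)
    rw [hp0] at h0
    unfold prodW at h0
    by_cases hq2 : (p 1).2 = x'
    · -- V-step
      have hq1 : (p 1).1 ≠ x := by
        rintro hq1
        rw [hq1, hq2, hs x, hs' x'] at h0
        simp at h0
      rw [if_neg hq1, hq2] at h0
      simp only [if_pos rfl, mul_one, mul_zero, add_zero] at h0
      have hμ : 0 < μ x (p 1).1 := by
        by_contra hcon
        push_neg at hcon
        have hz : μ x (p 1).1 = 0 := le_antisymm hcon (hnn x (p 1).1)
        rw [hz] at h0
        simp at h0
      rw [hq2] at hl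
      exact ⟨k + 1, l, by omega, hasPathLen_cons hμ hk, hl⟩
    · -- V'-step
      have hq1 : (p 1).1 = x := by
        by_contra hq1
        rw [if_neg hq1, if_neg hq2] at h0
        simp at h0
      rw [if_neg hq2, if_pos hq1, hq1] at h0
      simp only [mul_zero, mul_one, zero_add] at h0
      have hμ : 0 < μ' x' (p 1).2 := by
        by_contra hcon
        push_neg at hcon
        have hz : μ' x' (p 1).2 = 0 := le_antisymm hcon (hnn' x' (p 1).2)
        rw [hz] at h0
        simp at h0
      rw [hq1] at hk
      exact ⟨k, l + 1, by omega, hk, hasPathLen_cons hμ hl⟩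

end Aux2

section Aux3
variable {V V' : Type*} [Fintype V] [Fintype V']
variable {μ : V → V → ℝ} {μ' : V' → V' → ℝ} {α β : ℝ}

lemma vdeg_prod (μ : V → V → ℝ) (μ' : V' → V' → ℝ) (α β : ℝ) (x : V) (x' : V') :
    vdeg (prodW μ μ' α β) (x, x') = (α + β) * (vdeg μ x * vdeg μ' x') := by
  simp only [vdeg, prodW]
  rw [Fintype.sum_prod_type]
  simp only [mul_ite, mul_one, mul_zero, Finset.sum_add_distrib, Finset.sum_ite_eq',
    Finset.mem_univ, if_true, Finset.sum_ite_irrel, Finset.sum_const_zero,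
    ← Finset.sum_mul, ← Finset.mul_sum, vdeg]
  ring

lemma transP_prod (hdeg : ∀ x, 0 < vdeg μ x) (hdeg' : ∀ x', 0 < vdeg μ' x')
    (hα : 0 < α) (hβ : 0 < β) (x y : V) (x' y' : V') :
    transP (prodW μ μ' α β) (x, x') (y, y')
      = β / (α + β) * transP μ x y * (if y' = x' then 1 else 0)
        + α / (α + β) * transP μ' x' y' * (if y = x then 1 else 0) := by
  unfold transP
  rw [vdeg_prod]
  simp only [prodW]
  have hαβ : α + β ≠ 0 := by positivity
  have h1 : vdeg μ x ≠ 0 := ne_of_gt (hdeg x)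
  have h2 : vdeg μ' x' ≠ 0 := ne_of_gt (hdeg' x')
  rcases eq_or_ne y' x' with h3 | h3 <;> rcases eq_or_ne y x with h4 | h4
  · subst h3; subst h4
    simp only [eq_self_iff_true, if_true, mul_one]
    field_simp
  · subst h3
    simp only [eq_self_iff_true, if_true, if_neg h4, if_neg (Ne.symm h4 : ¬ x = y), mul_one, mul_zero,
      add_zero, zero_add]
    field_simp
  · subst h4
    simp only [eq_self_iff_true, if_true, if_neg h3, if_neg (Ne.symm h3 : ¬ x' = y'), mul_one, mul_zero,
      add_zero, zero_add]
    field_simp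
  · simp only [if_neg h3, if_neg h4, mul_zero, add_zero, zero_add, zero_div]
    try norm_num

lemma rowsum_meanK {m : V → ℝ} (hm : IsPerron μ m) (hdeg : ∀ x, 0 < vdeg μ x) (x : V) :
    ∑ y, meanK μ m x y = 1 := by
  unfold meanK
  rw [← Finset.sum_div, Finset.sum_add_distrib, rowsum_transP (ne_of_gt (hdeg x))]
  have e2 : ∑ y, m y / m x * transP μ y x = 1 := by
    simp only [div_mul_eq_mul_div]
    rw [← Finset.sum_div, ← hm.2.2 x]
    exact div_self (ne_of_gt (hm.1 x))
  rw [e2]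
  norm_num

lemma meanK_prod {m : V → ℝ} {m' : V' → ℝ}
    (hmpos : ∀ x, 0 < m x) (hmpos' : ∀ x', 0 < m' x')
    (hdeg : ∀ x, 0 < vdeg μ x) (hdeg' : ∀ x', 0 < vdeg μ' x')
    (hα : 0 < α) (hβ : 0 < β) (x y : V) (x' y' : V') :
    meanK (prodW μ μ' α β) (fun p => m p.1 * m' p.2) (x, x') (y, y')
      = β / (α + β) * meanK μ m x y * (if y' = x' then 1 else 0)
        + α / (α + β) * meanK μ' m' x' y' * (if y = x then 1 else 0) := by
  unfold meanK
  rw [transP_prod hdeg hdeg' hα hβ, transP_prod hdeg hdeg' hα hβ]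
  have hmx := ne_of_gt (hmpos x)
  have hmy := ne_of_gt (hmpos y)
  have hmx' := ne_of_gt (hmpos' x')
  have hmy' := ne_of_gt (hmpos' y')
  have hαβ : α + β ≠ 0 := by positivity
  rcases eq_or_ne y' x' with h3 | h3 <;> rcases eq_or_ne y x with h4 | h4
  · subst h3; subst h4
    simp only [eq_self_iff_true, if_true, mul_one]
    field_simp
  · subst h3
    simp only [eq_self_iff_true, if_true, if_neg h4, if_neg (Ne.symm h4 : ¬ x = y), mul_one, mul_zero,
      add_zero, zero_add]
    field_simp
  · subst h4
    simp only [eq_self_iff_true, if_true, if_neg h3, if_neg (Ne.symm h3 : ¬ x' = y'), mul_one, mul_zero,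
      add_zero, zero_add]
    field_simp
  · simp only [if_neg h3, if_neg h4, if_neg (Ne.symm h3 : ¬ x' = y'),
      if_neg (Ne.symm h4 : ¬ x = y), mul_zero, add_zero, zero_add]
    try norm_num

lemma isPerron_prod {m : V → ℝ} {m' : V' → ℝ}
    (hm : IsPerron μ m) (hm' : IsPerron μ' m')
    (hdeg : ∀ x, 0 < vdeg μ x) (hdeg' : ∀ x', 0 < vdeg μ' x')
    (hα : 0 < α) (hβ : 0 < β) :
    IsPerron (prodW μ μ' α β) (fun p => m p.1 * m' p.2) := by
  have hαβ : α + β ≠ 0 := by positivity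
  refine ⟨fun p => mul_pos (hm.1 p.1) (hm'.1 p.2), ?_, ?_⟩
  · rw [Fintype.sum_prod_type, ← Finset.sum_mul_sum, hm.2.1, hm'.2.1, one_mul]
  · rintro ⟨x, x'⟩
    rw [Fintype.sum_prod_type]
    have he : ∀ y : V, ∀ y' : V', m y * m' y' * transP (prodW μ μ' α β) (y, y') (x, x')
        = (if x' = y' then β / (α + β) * (m y * transP μ y x) * m' y' else 0)
          + (if x = y then α / (α + β) * (m' y' * transP μ' y' x') * m y else 0) := by
      intro y y'
      rw [transP_prod hdeg hdeg' hα hβ]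
      rcases eq_or_ne x' y' with h3 | h3 <;> rcases eq_or_ne x y with h4 | h4
      · subst h3; subst h4
        simp only [eq_self_iff_true, if_true, mul_one]
        ring
      · subst h3
        simp only [eq_self_iff_true, if_true, if_neg h4, if_neg (Ne.symm h4 : ¬ y = x), mul_one, mul_zero,
          add_zero, zero_add]
        ring
      · subst h4
        simp only [eq_self_iff_true, if_true, if_neg h3, if_neg (Ne.symm h3 : ¬ y' = x'), mul_one, mul_zero,
          add_zero, zero_add]
        ring
      · simp only [if_neg h3, if_neg h4, if_neg (Ne.symm h3 : ¬ y' = x'),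
          if_neg (Ne.symm h4 : ¬ y = x), mul_zero, add_zero, zero_add]
    simp_rw [he]
    simp only [Finset.sum_add_distrib, Finset.sum_ite_irrel, Finset.sum_const_zero,
      Finset.sum_ite_eq, Finset.mem_univ, if_true]
    have e1 : ∑ y, β / (α + β) * (m y * transP μ y x) * m' x'
        = β / (α + β) * (m x * m' x') := by
      rw [← Finset.sum_mul, ← Finset.mul_sum, ← hm.2.2 x]
      ring
    have e2 : ∑ y', α / (α + β) * (m' y' * transP μ' y' x') * m x
        = α / (α + β) * (m x * m' x') := by
      rw [← Finset.sum_mul, ← Finset.mul_sum, ← hm'.2.2 x']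
      ring
    rw [e1, e2]
    show m x * m' x' = _
    field_simp
    ring

end Aux3

/-- ℓ¹-distance and Laplacian formulas on the weighted Cartesian product. -/
theorem prod_dist_and_laplacian
    {V V' : Type*} [Fintype V] [Fintype V']
    (μ : V → V → ℝ) (μ' : V' → V' → ℝ) (m : V → ℝ) (m' : V' → ℝ)
    (hnn : Nonneg μ) (hsimple : IsSimpleW μ) (hconn : StronglyConnectedW μ)
    (hm : IsPerron μ m)
    (hnn' : Nonneg μ') (hsimple' : IsSimpleW μ') (hconn' : StronglyConnectedW μ')
    (hm' : IsPerron μ' m')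
    (α β : ℝ) (hα : 0 < α) (hβ : 0 < β)
    (M : V × V' → ℝ) (hM : IsPerron (prodW μ μ' α β) M) :
    (∀ (x y : V) (x' y' : V'),
        gdist (prodW μ μ' α β) (x, x') (y, y') = gdist μ x y + gdist μ' x' y') ∧
    (∀ (f : V → ℝ) (f' : V' → ℝ) (x : V) (x' : V'),
        chungL (meanK (prodW μ μ' α β) M) (fun p => f p.1 + f' p.2) (x, x')
          = β / (α + β) * chungL (meanK μ m) f x
            + α / (α + β) * chungL (meanK μ' m') f' x') := by
  have hVne : Nonempty (V × V') := perron_nonempty hM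
  -- positivity of vertex degrees
  have hzeroM : (∀ p q : V × V', prodW μ μ' α β p q = 0) → False := by
    intro hzero
    obtain ⟨p⟩ := hVne
    have h0 : M p = 0 := by
      rw [hM.2.2 p]
      apply Finset.sum_eq_zero
      intro q _
      unfold transP
      rw [hzero q p]
      simp
    have := hM.1 p
    rw [h0] at this
    exact lt_irrefl 0 this
  have hdeg : ∀ x : V, 0 < vdeg μ x := by
    by_cases hnt : ∃ a b : V, a ≠ b
    · intro x
      obtain ⟨a, b, hab⟩ := hnt
      rcases ne_or_eq a x with h | h
      · exact vdeg_pos_of_ne hnn hconn h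
      · exact vdeg_pos_of_ne hnn hconn (show b ≠ x from h ▸ hab.symm)
    · exfalso
      push_neg at hnt
      apply hzeroM
      intro p q
      unfold prodW
      have h1 : μ p.1 q.1 = 0 := by rw [hnt q.1 p.1]; exact hsimple p.1
      have h2 : vdeg μ p.1 = 0 := by
        unfold vdeg
        apply Finset.sum_eq_zero
        intro y _
        rw [hnt y p.1]
        exact hsimple p.1
      rw [h1, h2]
      ring
  have hdeg' : ∀ x' : V', 0 < vdeg μ' x' := by
    by_cases hnt : ∃ a b : V', a ≠ b
    · intro x'
      obtain ⟨a, b, hab⟩ := hnt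
      rcases ne_or_eq a x' with h | h
      · exact vdeg_pos_of_ne hnn' hconn' h
      · exact vdeg_pos_of_ne hnn' hconn' (show b ≠ x' from h ▸ hab.symm)
    · exfalso
      push_neg at hnt
      apply hzeroM
      intro p q
      unfold prodW
      have h1 : μ' p.2 q.2 = 0 := by rw [hnt q.2 p.2]; exact hsimple' p.2
      have h2 : vdeg μ' p.2 = 0 := by
        unfold vdeg
        apply Finset.sum_eq_zero
        intro y _
        rw [hnt y p.2]
        exact hsimple' p.2
      rw [h1, h2]
      ring
  constructor
  · -- distance formula
    intro x y x' y'
    have h1 : ∃ n, HasPathLen μ x y n := hconn x y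
    have h2 : ∃ n, HasPathLen μ' x' y' n := hconn' x' y'
    have hp : HasPathLen (prodW μ μ' α β) (x, x') (y, y') (Nat.find h1 + Nat.find h2) :=
      hasPathLen_prod hnn hnn' hsimple hsimple' hα hβ hdeg hdeg'
        (Nat.find_spec h1) (Nat.find_spec h2)
    have h3 : ∃ n, HasPathLen (prodW μ μ' α β) (x, x') (y, y') n := ⟨_, hp⟩
    rw [gdist_eq h1, gdist_eq h2, gdist_eq h3]
    have hle : Nat.find h3 ≤ Nat.find h1 + Nat.find h2 := Nat.find_le hp
    obtain ⟨k, l, hkl, hk, hl⟩ := hasPathLen_prod_decomp hnn hnn' hsimple hsimple' hα hβ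
      (Nat.find h3) x y x' y' (Nat.find_spec h3)
    have hk1 : Nat.find h1 ≤ k := Nat.find_le hk
    have hl1 : Nat.find h2 ≤ l := Nat.find_le hl
    have : Nat.find h3 = Nat.find h1 + Nat.find h2 := by omega
    rw [this]
    push_cast
    ring
  · -- Laplacian formula
    intro f f' x x'
    have hconnP : StronglyConnectedW (prodW μ μ' α β) := by
      rintro ⟨a, a'⟩ ⟨b, b'⟩
      obtain ⟨k, hk⟩ := hconn a b
      obtain ⟨l, hl⟩ := hconn' a' b'
      exact ⟨k + l, hasPathLen_prod hnn hnn' hsimple hsimple' hα hβ hdeg hdeg' hk hl⟩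
    have hdegP : ∀ p : V × V', 0 < vdeg (prodW μ μ' α β) p := by
      rintro ⟨a, a'⟩
      rw [vdeg_prod]
      exact mul_pos (by linarith) (mul_pos (hdeg a) (hdeg' a'))
    have hMeq : M = fun p : V × V' => m p.1 * m' p.2 :=
      funext fun p => perron_unique (prodW_nonneg hnn hnn' hα hβ) hconnP hdegP
        (isPerron_prod hm hm' hdeg hdeg' hα hβ) hM p
    rw [hMeq]
    unfold chungL
    have he : ∀ (y : V) (y' : V'),
        meanK (prodW μ μ' α β) (fun p => m p.1 * m' p.2) (x, x') (y, y') * (f y + f' y')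
          = (if y' = x' then β / (α + β) * (meanK μ m x y * (f y + f' x')) else 0)
            + (if y = x then α / (α + β) * (meanK μ' m' x' y' * (f x + f' y')) else 0) := by
      intro y y'
      rw [meanK_prod hm.1 hm'.1 hdeg hdeg' hα hβ]
      rcases eq_or_ne y' x' with h3 | h3 <;> rcases eq_or_ne y x with h4 | h4
      · subst h3; subst h4; simp; ring
      · subst h3; simp [h4]; ring
      · subst h4; simp [h3]; ring
      · simp [h3, h4]
    have key : ∑ p : V × V',
        meanK (prodW μ μ' α β) (fun p => m p.1 * m' p.2) (x, x') p * (f p.1 + f' p.2)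
          = β / (α + β) * ((∑ y, meanK μ m x y * f y) + f' x')
            + α / (α + β) * (f x + (∑ y', meanK μ' m' x' y' * f' y')) := by
      rw [Fintype.sum_prod_type]
      simp_rw [he]
      simp only [Finset.sum_add_distrib, Finset.sum_ite_irrel, Finset.sum_const_zero,
        Finset.sum_ite_eq', Finset.mem_univ, if_true]
      have e1 : ∑ y, β / (α + β) * (meanK μ m x y * (f y + f' x'))
          = β / (α + β) * ((∑ y, meanK μ m x y * f y) + f' x') := by
        rw [← Finset.mul_sum]
        congr 1
        have h : ∑ y, meanK μ m x y * (f y + f' x')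
            = (∑ y, meanK μ m x y * f y) + (∑ y, meanK μ m x y) * f' x' := by
          rw [Finset.sum_mul, ← Finset.sum_add_distrib]
          exact Finset.sum_congr rfl fun y _ => by ring
        rw [h, rowsum_meanK hm hdeg x, one_mul]
      have e2 : ∑ y', α / (α + β) * (meanK μ' m' x' y' * (f x + f' y'))
          = α / (α + β) * (f x + (∑ y', meanK μ' m' x' y' * f' y')) := by
        rw [← Finset.mul_sum]
        congr 1
        have h : ∑ y', meanK μ' m' x' y' * (f x + f' y')
            = (∑ y', meanK μ' m' x' y') * f x + (∑ y', meanK μ' m' x' y' * f' y') := by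
          rw [Finset.sum_mul, ← Finset.sum_add_distrib]
          exact Finset.sum_congr rfl fun y _ => by ring
        rw [h, rowsum_meanK hm' hdeg' x', one_mul]
      rw [e1, e2]
    show f x + f' x' - _ = _
    rw [key]
    have hst : β / (α + β) + α / (α + β) = 1 := by
      rw [← add_div, add_comm β α]
      exact div_self (ne_of_gt (by linarith : (0:ℝ) < α + β))
    linear_combination (-(f x + f' x')) * hst
end
end
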